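/- Suppose the censoring variable C is independent of (Z, W, U), T is a function of (Z, U), Y = min(T, C), δ = 1{T ≤ C}, and G(s) = P(C ≥ s). Let β ∈ ℝ^K be such that exp(z⊤β) < c̄ for all z ∈ 𝒵, where c̄ is the upper bound of the support of C (so G(Y) > 0 on the event {Y ≤ exp(Z⊤β)}). Then E[(δ/G(Y)) · 1{Y ≤ exp(Z⊤β)} | W = w] = E[1{T ≤ exp(Z⊤β)} | W = w] for all w in the support of W. -/

import Mathlib

open MeasureTheory ProbabilityTheory Set

/-- If `C ⫫ (Z, W, U)`, `T = f(Z,U)`, `Y = min(T,C)`, `δ = 1{T ≤ C}`,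
`G(s) = P(C ≥ s)`, and `exp(z⊤β) < c̄` for all `z ∈ 𝒵` where `c̄` bounds the support of `C`
below which `G > 0`, then `E[(δ/G(Y))·1{Y ≤ exp(Z⊤β)} | W] = E[1{T ≤ exp(Z⊤β)} | W]` a.s. -/
theorem stmt3
    {Ω : Type*} [MeasurableSpace Ω] (μ : Measure Ω) [IsProbabilityMeasure μ]
    {K L : ℕ} (Z : Ω → Fin K → ℝ) (W : Ω → Fin L → ℝ) (U : Ω → ℝ) (C : Ω → ℝ)
    (𝒵 : Set (Fin K → ℝ)) (hZsupp : ∀ ω, Z ω ∈ 𝒵)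
    (hZm : Measurable Z) (hWm : Measurable W) (hUm : Measurable U) (hCm : Measurable C)
    (f : (Fin K → ℝ) × ℝ → ℝ) (hf : Measurable f)
    (T : Ω → ℝ) (hTdef : ∀ ω, T ω = f (Z ω, U ω))
    (hTnonneg : ∀ ω, 0 ≤ T ω) (hCnonneg : ∀ ω, 0 ≤ C ω)
    (hindep : IndepFun C (fun ω => (Z ω, W ω, U ω)) μ)
    (G : ℝ → ℝ) (hG : ∀ s, G s = (μ {ω | s ≤ C ω}).toReal)
    (cbar : ℝ) (hGpos : ∀ t, t < cbar → 0 < μ {ω | t ≤ C ω})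
    (hCbdd : ∀ᵐ ω ∂μ, C ω ≤ cbar)
    (β : Fin K → ℝ) (hβ : ∀ z ∈ 𝒵, Real.exp (∑ i, z i * β i) < cbar)
    (Y : Ω → ℝ) (hY : ∀ ω, Y ω = min (T ω) (C ω))
    (δ : Ω → ℝ) (hδ : ∀ ω, δ ω = if T ω ≤ C ω then 1 else 0) :
    μ[(fun ω => (δ ω / G (Y ω)) *
        (if Y ω ≤ Real.exp (∑ i, Z ω i * β i) then (1:ℝ) else 0)) |
        MeasurableSpace.comap W inferInstance]
      =ᵐ[μ]
    μ[(fun ω => if T ω ≤ Real.exp (∑ i, Z ω i * β i) then (1:ℝ) else 0) |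
        MeasurableSpace.comap W inferInstance] := by
  classical
  have hm : MeasurableSpace.comap W inferInstance ≤ ‹MeasurableSpace Ω› := hWm.comap_le
  -- basic measurability
  have hEm : Measurable fun ω => Real.exp (∑ i, Z ω i * β i) :=
    (Finset.univ.measurable_sum fun i _ =>
      ((measurable_pi_apply i).comp hZm).mul_const (β i)).exp
  have hTm : Measurable T := by
    have : T = fun ω => f (Z ω, U ω) := funext hTdef
    rw [this]; exact hf.comp (hZm.prodMk hUm)
  have hGanti : Antitone G := by
    intro a b hab
    rw [hG, hG]
    exact ENNReal.toReal_mono (measure_ne_top μ _)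
      (measure_mono fun ω h => hab.trans h)
  have hGm : Measurable G := hGanti.measurable
  have hGnonneg : ∀ t, 0 ≤ G t := fun t => by rw [hG]; exact ENNReal.toReal_nonneg
  set F1 : Ω → ℝ := fun ω => (δ ω / G (Y ω)) *
      (if Y ω ≤ Real.exp (∑ i, Z ω i * β i) then (1:ℝ) else 0) with hF1
  set F2 : Ω → ℝ := fun ω =>
      if T ω ≤ Real.exp (∑ i, Z ω i * β i) then (1:ℝ) else 0 with hF2
  -- pointwise rewriting of F1
  have key : ∀ ω, F1 ω = ((if T ω ≤ C ω then (1:ℝ) else 0) *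
      (if T ω ≤ Real.exp (∑ i, Z ω i * β i) then (1:ℝ) else 0)) / G (T ω) := by
    intro ω
    by_cases h : T ω ≤ C ω
    · have hYT : Y ω = T ω := by rw [hY]; exact min_eq_left h
      rw [hF1]
      simp only [hδ, h, if_pos, hYT]
      rw [div_mul_eq_mul_div]
    · have hδ0 : δ ω = 0 := by rw [hδ, if_neg h]
      rw [hF1]
      simp only [hδ0, zero_div, zero_mul, if_neg h, zero_div]
  have hF1m : Measurable F1 := by
    rw [hF1]
    have hYm : Measurable Y := by
      have : Y = fun ω => min (T ω) (C ω) := funext hY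
      rw [this]; exact hTm.min hCm
    have hδm : Measurable δ := by
      have : δ = fun ω => if T ω ≤ C ω then (1:ℝ) else 0 := funext hδ
      rw [this]
      exact Measurable.ite (measurableSet_le hTm hCm) measurable_const measurable_const
    exact (hδm.div (hGm.comp hYm)).mul
      (Measurable.ite (measurableSet_le hYm hEm) measurable_const measurable_const)
  have hF2m : Measurable F2 := by
    rw [hF2]
    exact Measurable.ite (measurableSet_le hTm hEm) measurable_const measurable_const
  have hF1nonneg : ∀ ω, 0 ≤ F1 ω := by
    intro ω
    rw [key ω]
    refine div_nonneg (mul_nonneg ?_ ?_) (hGnonneg _) <;> split <;> norm_num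
  have hF2nonneg : ∀ ω, 0 ≤ F2 ω := by
    intro ω; rw [hF2]; dsimp only; split <;> norm_num
  have hF2le : ∀ ω, F2 ω ≤ 1 := by
    intro ω; rw [hF2]; dsimp only; split <;> norm_num
  -- the auxiliary variable V and independence
  set V : Ω → ℝ × ℝ × (Fin L → ℝ) :=
    fun ω => (T ω, Real.exp (∑ i, Z ω i * β i), W ω) with hV
  have hVm : Measurable V := hTm.prodMk (hEm.prodMk hWm)
  have hCV : IndepFun C V μ := by
    have h1 : V = (fun p : (Fin K → ℝ) × (Fin L → ℝ) × ℝ =>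
        (f (p.1, p.2.2), Real.exp (∑ i, p.1 i * β i), p.2.1)) ∘
        (fun ω => (Z ω, W ω, U ω)) := by
      funext ω
      simp only [hV, Function.comp_apply, hTdef ω]
    rw [h1]
    exact hindep.comp measurable_id
      ((hf.comp (measurable_fst.prodMk (measurable_snd.comp measurable_snd))).prodMk
        (((Finset.univ.measurable_sum fun i _ =>
          ((measurable_pi_apply i).comp measurable_fst :
            Measurable fun p : (Fin K → ℝ) × (Fin L → ℝ) × ℝ => p.1 i).mul_const (β i)).exp).prodMk
          (measurable_fst.comp measurable_snd)))
  have hpair : μ.map (fun ω => (C ω, V ω)) = (μ.map C).prod (μ.map V) :=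
    (indepFun_iff_map_prod_eq_prod_map_map hCm.aemeasurable hVm.aemeasurable).mp hCV
  haveI : IsProbabilityMeasure (μ.map C) := Measure.isProbabilityMeasure_map hCm.aemeasurable
  haveI : IsProbabilityMeasure (μ.map V) := Measure.isProbabilityMeasure_map hVm.aemeasurable
  -- main set-lintegral identity
  have main : ∀ A : Set (Fin L → ℝ), MeasurableSet A →
      ∫⁻ ω in W ⁻¹' A, ENNReal.ofReal (F1 ω) ∂μ
        = ∫⁻ ω in W ⁻¹' A, ENNReal.ofReal (F2 ω) ∂μ := by
    intro A hA
    set k : ℝ × ℝ × ℝ × (Fin L → ℝ) → ENNReal := fun p =>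
      ENNReal.ofReal (((if p.2.1 ≤ p.1 then (1:ℝ) else 0) *
        (if p.2.1 ≤ p.2.2.1 then (1:ℝ) else 0) *
        (if p.2.2.2 ∈ A then (1:ℝ) else 0)) / G p.2.1) with hk
    have htm : Measurable fun p : ℝ × ℝ × ℝ × (Fin L → ℝ) => p.2.1 :=
      measurable_fst.comp measurable_snd
    have ham : Measurable fun p : ℝ × ℝ × ℝ × (Fin L → ℝ) => p.2.2.1 :=
      measurable_fst.comp (measurable_snd.comp measurable_snd)
    have hwm : Measurable fun p : ℝ × ℝ × ℝ × (Fin L → ℝ) => p.2.2.2 :=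
      measurable_snd.comp (measurable_snd.comp measurable_snd)
    have hkm : Measurable k := by
      rw [hk]
      refine ENNReal.measurable_ofReal.comp ?_
      refine Measurable.div ?_ (hGm.comp htm)
      refine Measurable.mul (Measurable.mul ?_ ?_) ?_
      · exact Measurable.ite (measurableSet_le htm measurable_fst)
          measurable_const measurable_const
      · exact Measurable.ite (measurableSet_le htm ham)
          measurable_const measurable_const
      · exact Measurable.ite (hwm hA) measurable_const measurable_const
    have stepA : ∫⁻ ω in W ⁻¹' A, ENNReal.ofReal (F1 ω) ∂μ
        = ∫⁻ ω, k (C ω, V ω) ∂μ := by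
      rw [← lintegral_indicator (hWm hA)]
      refine lintegral_congr fun ω => ?_
      by_cases hw : W ω ∈ A
      · rw [Set.indicator_of_mem (show ω ∈ W ⁻¹' A from hw), key ω]
        simp only [hk, hV, if_pos hw, mul_one]
      · rw [Set.indicator_of_notMem (show ω ∉ W ⁻¹' A from hw)]
        simp only [hk, hV, if_neg hw, mul_zero, zero_div, ENNReal.ofReal_zero]
    have hgm : Measurable fun v : ℝ × ℝ × (Fin L → ℝ) =>
        ENNReal.ofReal ((if v.1 ≤ v.2.1 then (1:ℝ) else 0) *
          (if v.2.2 ∈ A then (1:ℝ) else 0)) := by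
      refine ENNReal.measurable_ofReal.comp (Measurable.mul ?_ ?_)
      · exact Measurable.ite
          (measurableSet_le measurable_fst (measurable_fst.comp measurable_snd))
          measurable_const measurable_const
      · exact Measurable.ite ((measurable_snd.comp measurable_snd) hA)
          measurable_const measurable_const
    have hae : ∀ᵐ v ∂(μ.map V), v.2.1 < cbar := by
      rw [MeasureTheory.ae_map_iff hVm.aemeasurable
        (measurableSet_lt measurable_snd.fst measurable_const)]
      refine ae_of_all _ fun ω => ?_
      simp only [hV]
      exact hβ _ (hZsupp ω)
    have inner : ∫⁻ v, ∫⁻ c, k (c, v) ∂(μ.map C) ∂(μ.map V)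
        = ∫⁻ v, ENNReal.ofReal ((if v.1 ≤ v.2.1 then (1:ℝ) else 0) *
            (if v.2.2 ∈ A then (1:ℝ) else 0)) ∂(μ.map V) := by
      refine lintegral_congr_ae (hae.mono fun v hv => ?_)
      obtain ⟨t, a, w⟩ := v
      simp only at hv
      dsimp only
      have hmapC : (μ.map C) (Set.Ici t) = μ {ω | t ≤ C ω} := by
        rw [Measure.map_apply hCm measurableSet_Ici]; rfl
      have step1 : ∫⁻ c, k (c, (t, a, w)) ∂(μ.map C)
          = ENNReal.ofReal (((if t ≤ a then (1:ℝ) else 0) *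
              (if w ∈ A then (1:ℝ) else 0)) / G t) * μ {ω | t ≤ C ω} := by
        have hpt : ∀ c, k (c, (t, a, w)) = Set.indicator (Set.Ici t)
            (fun _ => ENNReal.ofReal (((if t ≤ a then (1:ℝ) else 0) *
              (if w ∈ A then (1:ℝ) else 0)) / G t)) c := by
          intro c
          simp only [hk, Set.indicator_apply, Set.mem_Ici]
          by_cases h : t ≤ c
          · rw [if_pos h, if_pos h, one_mul]
          · rw [if_neg h, if_neg h, zero_mul, zero_mul, zero_div, ENNReal.ofReal_zero]
        simp_rw [hpt]
        rw [lintegral_indicator measurableSet_Ici, setLIntegral_const, hmapC]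
      rw [step1]
      by_cases hta : t ≤ a
      · have htc : t < cbar := lt_of_le_of_lt hta hv
        have hpos : 0 < μ {ω | t ≤ C ω} := hGpos t htc
        have hne : μ {ω | t ≤ C ω} ≠ ⊤ := measure_ne_top μ _
        have hGtpos : 0 < G t := by
          rw [hG]; exact ENNReal.toReal_pos hpos.ne' hne
        have hμeq : μ {ω | t ≤ C ω} = ENNReal.ofReal (G t) := by
          rw [hG, ENNReal.ofReal_toReal hne]
        rw [hμeq, ← ENNReal.ofReal_mul
          (div_nonneg (mul_nonneg (by split <;> norm_num) (by split <;> norm_num))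
            (hGnonneg t))]
        congr 1
        rw [div_mul_cancel₀ _ hGtpos.ne']
      · simp [hta]
    have stepZ : ∫⁻ ω, ENNReal.ofReal ((if T ω ≤ Real.exp (∑ i, Z ω i * β i)
          then (1:ℝ) else 0) * (if W ω ∈ A then (1:ℝ) else 0)) ∂μ
        = ∫⁻ ω in W ⁻¹' A, ENNReal.ofReal (F2 ω) ∂μ := by
      rw [← lintegral_indicator (hWm hA)]
      refine lintegral_congr fun ω => ?_
      by_cases hw : W ω ∈ A
      · rw [Set.indicator_of_mem (show ω ∈ W ⁻¹' A from hw), if_pos hw, mul_one, hF2]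
      · rw [Set.indicator_of_notMem (show ω ∉ W ⁻¹' A from hw), if_neg hw, mul_zero, ENNReal.ofReal_zero]
    calc ∫⁻ ω in W ⁻¹' A, ENNReal.ofReal (F1 ω) ∂μ
        = ∫⁻ ω, k (C ω, V ω) ∂μ := stepA
      _ = ∫⁻ p, k p ∂(μ.map fun ω => (C ω, V ω)) :=
          (lintegral_map hkm (hCm.prodMk hVm)).symm
      _ = ∫⁻ p, k p ∂((μ.map C).prod (μ.map V)) := by rw [hpair]
      _ = ∫⁻ v, ∫⁻ c, k (c, v) ∂(μ.map C) ∂(μ.map V) :=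
          lintegral_prod_symm k hkm.aemeasurable
      _ = ∫⁻ v, ENNReal.ofReal ((if v.1 ≤ v.2.1 then (1:ℝ) else 0) *
            (if v.2.2 ∈ A then (1:ℝ) else 0)) ∂(μ.map V) := inner
      _ = ∫⁻ ω, ENNReal.ofReal ((if T ω ≤ Real.exp (∑ i, Z ω i * β i)
            then (1:ℝ) else 0) * (if W ω ∈ A then (1:ℝ) else 0)) ∂μ := by
          rw [lintegral_map hgm hVm]
      _ = ∫⁻ ω in W ⁻¹' A, ENNReal.ofReal (F2 ω) ∂μ := stepZ
  -- integrability
  have hlint2 : ∫⁻ ω, ENNReal.ofReal (F2 ω) ∂μ ≤ 1 := by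
    calc ∫⁻ ω, ENNReal.ofReal (F2 ω) ∂μ ≤ ∫⁻ _, 1 ∂μ :=
          lintegral_mono fun ω => ENNReal.ofReal_le_one.mpr (hF2le ω)
      _ = 1 := by simp
  have hlint1 : ∫⁻ ω, ENNReal.ofReal (F1 ω) ∂μ ≤ 1 := by
    have := main Set.univ MeasurableSet.univ
    rw [Set.preimage_univ, Measure.restrict_univ] at this
    rw [this]; exact hlint2
  have hint1 : Integrable F1 μ := by
    refine ⟨hF1m.aestronglyMeasurable, ?_⟩
    have heq : ∀ ω, (‖F1 ω‖₊ : ENNReal) = ENNReal.ofReal (F1 ω) := fun ω =>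
      Real.enorm_eq_ofReal (hF1nonneg ω)
    show (∫⁻ ω, (‖F1 ω‖₊ : ENNReal) ∂μ) < ⊤
    simp_rw [heq]
    exact lt_of_le_of_lt hlint1 ENNReal.one_lt_top
  have hint2 : Integrable F2 μ := by
    refine ⟨hF2m.aestronglyMeasurable, ?_⟩
    have heq : ∀ ω, (‖F2 ω‖₊ : ENNReal) = ENNReal.ofReal (F2 ω) := fun ω =>
      Real.enorm_eq_ofReal (hF2nonneg ω)
    show (∫⁻ ω, (‖F2 ω‖₊ : ENNReal) ∂μ) < ⊤
    simp_rw [heq]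
    exact lt_of_le_of_lt hlint2 ENNReal.one_lt_top
  -- real set-integral identity
  have mainR : ∀ s, MeasurableSet[MeasurableSpace.comap W inferInstance] s →
      ∫ x in s, F1 x ∂μ = ∫ x in s, F2 x ∂μ := by
    intro s hs
    obtain ⟨A, hA, rfl⟩ := hs
    rw [integral_eq_lintegral_of_nonneg_ae (ae_of_all _ hF1nonneg)
        hF1m.aestronglyMeasurable.restrict,
      integral_eq_lintegral_of_nonneg_ae (ae_of_all _ hF2nonneg)
        hF2m.aestronglyMeasurable.restrict,
      main A hA]
  have hfinal := ae_eq_condExp_of_forall_setIntegral_eq (μ := μ) hm hint1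
    (fun s _ _ => integrable_condExp.integrableOn)
    (fun s hs _ => by
      rw [setIntegral_condExp hm hint2 hs]
      exact (mainR s hs).symm)
    (StronglyMeasurable.aestronglyMeasurable stronglyMeasurable_condExp)
  exact hfinal.symm
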